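/- Let C = b_0 + K_{n=1}^∞ a_n/b_n be a continued fraction whose odd part converges to f_1 and whose even part converges to f_2 with f_1 ≠ f_2. Suppose there are positive constants c_1, c_2, c_3 such that c_1 ≤ |b_i| ≤ c_2 and |a_{2i+1}/a_{2i}| ≤ c_3 for all i ≥ 1. Then C does not converge generally: there do not exist f ∈ ℂ ∪ {∞} and sequences {v_n}, {w_n} in ℂ ∪ {∞} with liminf_n d(v_n, w_n) > 0 such that S_n(v_n) → f and S_n(w_n) → f, where d is the chordal metric and S_n(w) = (A_n + w A_{n-1})/(B_n + w B_{n-1}). -/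

import Mathlib

open Filter Topology

/-- The chordal metric on the Riemann sphere `ℂ ∪ {∞}`, modelled as `Option ℂ`
with `none = ∞`. -/
noncomputable def chordal : Option ℂ → Option ℂ → ℝ
  | some w, some z =>
      ‖z - w‖ /
        (Real.sqrt (1 + ‖w‖ ^ 2) * Real.sqrt (1 + ‖z‖ ^ 2))
  | some w, none => 1 / Real.sqrt (1 + ‖w‖ ^ 2)
  | none, some z => 1 / Real.sqrt (1 + ‖z‖ ^ 2)
  | none, none => 0

/-- The modified approximant `S_n(w) = (A_n + w A_{n-1})/(B_n + w B_{n-1})`, as a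
map of the Riemann sphere `Option ℂ`; `A`, `B` are indexed so that `A (n+1)`,
`B (n+1)` correspond to subscript `n`.  `S_n(∞) = A_{n-1}/B_{n-1}`. -/
noncomputable def modApprox (A B : ℕ → ℂ) (n : ℕ) : Option ℂ → Option ℂ
  | some w =>
      if B (n + 1) + w * B n = 0 then none
      else some ((A (n + 1) + w * A n) / (B (n + 1) + w * B n))
  | none => if B n = 0 then none else some (A n / B n)

/-! ### Auxiliary projective-space machinery -/

noncomputable def Complex.abs : AbsoluteValue ℂ ℝ :=
  IsAbsoluteValue.toAbsoluteValue (norm : ℂ → ℝ)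

@[simp] lemma Complex.abs_apply (z : ℂ) : Complex.abs z = ‖z‖ := rfl

lemma Complex.sq_abs (z : ℂ) : Complex.abs z ^ 2 = Complex.normSq z := Complex.sq_norm z

lemma Complex.continuous_abs : Continuous Complex.abs := continuous_norm

lemma Complex.abs_ofReal (r : ℝ) : Complex.abs (r : ℂ) = |r| := Complex.norm_real r

noncomputable def nrm (p : ℂ × ℂ) : ℝ := Real.sqrt (Complex.abs p.1 ^ 2 + Complex.abs p.2 ^ 2)

noncomputable def dtm (p q : ℂ × ℂ) : ℝ := Complex.abs (p.1 * q.2 - p.2 * q.1)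

noncomputable def dproj (p q : ℂ × ℂ) : ℝ := dtm p q / (nrm p * nrm q)

def lft : Option ℂ → ℂ × ℂ
  | some z => (z, 1)
  | none => (1, 0)

noncomputable def pt (p : ℂ × ℂ) : Option ℂ := if p.2 = 0 then none else some (p.1 / p.2)

lemma nrm_eq_norm (p : ℂ × ℂ) : nrm p = ‖(WithLp.equiv 2 (ℂ × ℂ)).symm p‖ := by
  rw [WithLp.prod_norm_eq_of_L2]
  rfl

lemma nrm_nonneg (p : ℂ × ℂ) : 0 ≤ nrm p := Real.sqrt_nonneg _

lemma nrm_sq (p : ℂ × ℂ) : nrm p ^ 2 = Complex.abs p.1 ^ 2 + Complex.abs p.2 ^ 2 :=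
  Real.sq_sqrt (by positivity)

lemma nrm_pos {p : ℂ × ℂ} (h : p ≠ 0) : 0 < nrm p := by
  have h1 : p.1 ≠ 0 ∨ p.2 ≠ 0 := by
    by_contra hc
    push_neg at hc
    exact h (Prod.ext hc.1 hc.2)
  apply Real.sqrt_pos.2
  rcases h1 with h1 | h1
  · have : 0 < Complex.abs p.1 ^ 2 := pow_pos (AbsoluteValue.pos _ h1) 2
    nlinarith [sq_nonneg (Complex.abs p.2)]
  · have : 0 < Complex.abs p.2 ^ 2 := pow_pos (AbsoluteValue.pos _ h1) 2
    nlinarith [sq_nonneg (Complex.abs p.1)]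

lemma nrm_smul (c : ℂ) (p : ℂ × ℂ) : nrm (c • p) = Complex.abs c * nrm p := by
  have h1 : (c • p).1 = c * p.1 := rfl
  have h2 : (c • p).2 = c * p.2 := rfl
  unfold nrm
  rw [h1, h2, map_mul, map_mul, mul_pow, mul_pow, ← mul_add,
    Real.sqrt_mul (by positivity), Real.sqrt_sq (by positivity)]

lemma nrm_add_le (p q : ℂ × ℂ) : nrm (p + q) ≤ nrm p + nrm q := by
  rw [nrm_eq_norm, nrm_eq_norm, nrm_eq_norm, WithLp.equiv_symm_apply, WithLp.toLp_add]
  exact norm_add_le _ _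

lemma nrm_neg (p : ℂ × ℂ) : nrm (-p) = nrm p := by
  unfold nrm
  have h1 : (-p).1 = -p.1 := rfl
  have h2 : (-p).2 = -p.2 := rfl
  rw [h1, h2, map_neg_eq_map, map_neg_eq_map]

lemma dtm_nonneg (p q : ℂ × ℂ) : 0 ≤ dtm p q := AbsoluteValue.nonneg _ _

lemma dtm_comm (p q : ℂ × ℂ) : dtm p q = dtm q p := by
  unfold dtm
  rw [← AbsoluteValue.map_neg Complex.abs]
  congr 1
  ring

lemma dtm_smul_left (c : ℂ) (p q : ℂ × ℂ) : dtm (c • p) q = Complex.abs c * dtm p q := by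
  have h1 : (c • p).1 = c * p.1 := rfl
  have h2 : (c • p).2 = c * p.2 := rfl
  unfold dtm
  rw [h1, h2, ← map_mul]
  congr 1
  ring

lemma dtm_le (p q : ℂ × ℂ) : dtm p q ≤ nrm p * nrm q := by
  have hsq : dtm p q ^ 2 ≤ (nrm p * nrm q) ^ 2 := by
    rw [mul_pow, nrm_sq, nrm_sq]
    unfold dtm
    rw [Complex.sq_abs]
    simp only [Complex.sq_abs, Complex.normSq_apply, Complex.sub_re, Complex.sub_im,
      Complex.mul_re, Complex.mul_im]
    nlinarith [sq_nonneg (p.1.re * q.1.re + p.1.im * q.1.im + p.2.re * q.2.re + p.2.im * q.2.im),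
      sq_nonneg (p.1.im * q.1.re - p.1.re * q.1.im + p.2.im * q.2.re - p.2.re * q.2.im)]
  have h1 := Real.sqrt_le_sqrt hsq
  rwa [Real.sqrt_sq (dtm_nonneg p q), Real.sqrt_sq (mul_nonneg (nrm_nonneg p) (nrm_nonneg q))] at h1

lemma dproj_nonneg (p q : ℂ × ℂ) : 0 ≤ dproj p q :=
  div_nonneg (dtm_nonneg p q) (mul_nonneg (nrm_nonneg p) (nrm_nonneg q))

lemma dproj_comm (p q : ℂ × ℂ) : dproj p q = dproj q p := by
  unfold dproj
  rw [dtm_comm, mul_comm]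

lemma dproj_smul_left {c : ℂ} (hc : c ≠ 0) (p q : ℂ × ℂ) : dproj (c • p) q = dproj p q := by
  unfold dproj
  rw [dtm_smul_left, nrm_smul, mul_assoc,
    mul_div_mul_left _ _ (by simpa using hc : Complex.abs c ≠ 0)]

lemma dproj_triangle {p q r : ℂ × ℂ} (hp : p ≠ 0) (hq : q ≠ 0) (hr : r ≠ 0) :
    dproj p r ≤ dproj p q + dproj q r := by
  have key : dtm p r * nrm q ≤ dtm p q * nrm r + dtm q r * nrm p := by
    have hid : (p.1 * r.2 - p.2 * r.1) • q
        = (p.1 * q.2 - p.2 * q.1) • r + (q.1 * r.2 - q.2 * r.1) • p := by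
      apply Prod.ext
      · show (p.1 * r.2 - p.2 * r.1) * q.1
          = (p.1 * q.2 - p.2 * q.1) * r.1 + (q.1 * r.2 - q.2 * r.1) * p.1
        ring
      · show (p.1 * r.2 - p.2 * r.1) * q.2
          = (p.1 * q.2 - p.2 * q.1) * r.2 + (q.1 * r.2 - q.2 * r.1) * p.2
        ring
    calc dtm p r * nrm q = nrm ((p.1 * r.2 - p.2 * r.1) • q) := by rw [nrm_smul]; rfl
      _ = nrm ((p.1 * q.2 - p.2 * q.1) • r + (q.1 * r.2 - q.2 * r.1) • p) := by rw [hid]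
      _ ≤ nrm ((p.1 * q.2 - p.2 * q.1) • r) + nrm ((q.1 * r.2 - q.2 * r.1) • p) := nrm_add_le _ _
      _ = dtm p q * nrm r + dtm q r * nrm p := by rw [nrm_smul, nrm_smul]; rfl
  have hp' := nrm_pos hp
  have hq' := nrm_pos hq
  have hr' := nrm_pos hr
  unfold dproj
  rw [div_add_div _ _ (by positivity) (by positivity), div_le_div_iff₀ (by positivity) (by positivity)]
  nlinarith [mul_le_mul_of_nonneg_left key (le_of_lt (mul_pos hp' hr')),
    dtm_nonneg p r, dtm_nonneg p q, dtm_nonneg q r]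

lemma lft_ne_zero (x : Option ℂ) : lft x ≠ 0 := by
  cases x with
  | none => simp [lft, Prod.ext_iff]
  | some z => simp [lft, Prod.ext_iff]

lemma chordal_eq (x y : Option ℂ) : chordal x y = dproj (lft x) (lft y) := by
  cases x with
  | none =>
    cases y with
    | none => simp [chordal, dproj, dtm, nrm, lft]
    | some z =>
      simp only [chordal, dproj, dtm, nrm, lft]
      norm_num [add_comm]
  | some w =>
    cases y with
    | none =>
      simp only [chordal, dproj, dtm, nrm, lft]
      norm_num [add_comm]
    | some z =>
      simp only [chordal, dproj, dtm, nrm, lft]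
      rw [← AbsoluteValue.map_neg Complex.abs]
      norm_num [add_comm]

lemma chordal_nonneg (x y : Option ℂ) : 0 ≤ chordal x y := by
  rw [chordal_eq]; exact dproj_nonneg _ _

lemma chordal_comm (x y : Option ℂ) : chordal x y = chordal y x := by
  rw [chordal_eq, chordal_eq, dproj_comm]

lemma chordal_triangle (x y z : Option ℂ) : chordal x z ≤ chordal x y + chordal y z := by
  rw [chordal_eq, chordal_eq, chordal_eq]
  exact dproj_triangle (lft_ne_zero x) (lft_ne_zero y) (lft_ne_zero z)

lemma lft_pt {p : ℂ × ℂ} (h : p ≠ 0) : ∃ c : ℂ, c ≠ 0 ∧ lft (pt p) = c • p := by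
  by_cases h2 : p.2 = 0
  · have h1 : p.1 ≠ 0 := by
      intro h1
      exact h (Prod.ext h1 h2)
    refine ⟨p.1⁻¹, inv_ne_zero h1, ?_⟩
    simp only [pt, if_pos h2, lft]
    apply Prod.ext
    · show (1 : ℂ) = p.1⁻¹ * p.1
      rw [inv_mul_cancel₀ h1]
    · show (0 : ℂ) = p.1⁻¹ * p.2
      rw [h2, mul_zero]
  · refine ⟨p.2⁻¹, inv_ne_zero h2, ?_⟩
    simp only [pt, if_neg h2, lft]
    apply Prod.ext
    · show p.1 / p.2 = p.2⁻¹ * p.1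
      rw [div_eq_inv_mul]
    · show (1 : ℂ) = p.2⁻¹ * p.2
      rw [inv_mul_cancel₀ h2]

lemma chordal_pt {p q : ℂ × ℂ} (hp : p ≠ 0) (hq : q ≠ 0) : chordal (pt p) (pt q) = dproj p q := by
  obtain ⟨c, hc, he⟩ := lft_pt hp
  obtain ⟨c', hc', he'⟩ := lft_pt hq
  rw [chordal_eq, he, he', dproj_smul_left hc, dproj_comm, dproj_smul_left hc', dproj_comm]

/-! ### Continued-fraction specific machinery -/

section CF

variable (A B : ℕ → ℂ)

noncomputable def Tmap (n : ℕ) (p : ℂ × ℂ) : ℂ × ℂ :=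
  (A n * p.1 + A (n + 1) * p.2, B n * p.1 + B (n + 1) * p.2)

noncomputable def colv (k : ℕ) : ℂ × ℂ := (A k, B k)

noncomputable def detc (n : ℕ) : ℂ := A n * B (n + 1) - B n * A (n + 1)

lemma dtm_Tmap (n : ℕ) (p q : ℂ × ℂ) :
    dtm (Tmap A B n p) (Tmap A B n q) = Complex.abs (detc A B n) * dtm p q := by
  unfold dtm Tmap detc
  rw [← map_mul]
  congr 1
  ring

lemma modApprox_eq_pt (n : ℕ) (x : Option ℂ) :
    modApprox A B n x = pt (Tmap A B n (lft x)) := by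
  cases x with
  | none =>
    show (if B n = 0 then none else some (A n / B n)) = _
    simp only [Tmap, lft, pt, mul_one, mul_zero, add_zero]
  | some w =>
    show (if B (n + 1) + w * B n = 0 then none
      else some ((A (n + 1) + w * A n) / (B (n + 1) + w * B n))) = _
    simp only [Tmap, lft, pt, mul_one]
    rw [show B n * w + B (n + 1) = B (n + 1) + w * B n from by ring,
      show A n * w + A (n + 1) = A (n + 1) + w * A n from by ring]

lemma modApprox_some_zero (n : ℕ) :
    modApprox A B n (some 0) = modApprox A B (n + 1) none := by
  show (if B (n + 1) + 0 * B n = 0 then none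
      else some ((A (n + 1) + 0 * A n) / (B (n + 1) + 0 * B n)))
    = (if B (n + 1) = 0 then none else some (A (n + 1) / B (n + 1)))
  norm_num

variable (a b : ℕ → ℂ)

lemma detc_ne (hane : ∀ i, 1 ≤ i → a i ≠ 0)
    (hA0 : A 0 = 1) (hA1 : A 1 = b 0) (hB0 : B 0 = 0) (hB1 : B 1 = 1)
    (hA : ∀ n, A (n + 2) = b (n + 1) * A (n + 1) + a (n + 1) * A n)
    (hB : ∀ n, B (n + 2) = b (n + 1) * B (n + 1) + a (n + 1) * B n) :
    ∀ n, detc A B n ≠ 0 := by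
  intro n
  induction n with
  | zero =>
    unfold detc
    rw [hA0, hA1, hB0, hB1]
    norm_num
  | succ k ih =>
    unfold detc at *
    rw [show k + 1 + 1 = k + 2 from rfl, hA k, hB k,
      show A (k + 1) * (b (k + 1) * B (k + 1) + a (k + 1) * B k)
        - B (k + 1) * (b (k + 1) * A (k + 1) + a (k + 1) * A k)
        = -a (k + 1) * (A k * B (k + 1) - B k * A (k + 1)) from by ring]
    exact mul_ne_zero (neg_ne_zero.2 (hane (k + 1) (by omega))) ih

lemma detc_succ_abs
    (hA : ∀ n, A (n + 2) = b (n + 1) * A (n + 1) + a (n + 1) * A n)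
    (hB : ∀ n, B (n + 2) = b (n + 1) * B (n + 1) + a (n + 1) * B n) (n : ℕ) :
    Complex.abs (detc A B (n + 1)) = Complex.abs (a (n + 1)) * Complex.abs (detc A B n) := by
  unfold detc
  rw [show n + 1 + 1 = n + 2 from rfl, hA n, hB n, ← map_mul,
    ← AbsoluteValue.map_neg Complex.abs]
  congr 1
  ring

lemma colv_ne_zero {n : ℕ} (hd : detc A B n ≠ 0) : colv A B n ≠ 0 := by
  intro h
  have h1 : A n = 0 := congrArg Prod.fst h
  have h2 : B n = 0 := congrArg Prod.snd h
  apply hd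
  unfold detc
  rw [h1, h2]
  ring

lemma Tmap_ne_zero {n : ℕ} (hd : detc A B n ≠ 0) {p : ℂ × ℂ} (hp : p ≠ 0) :
    Tmap A B n p ≠ 0 := by
  intro h
  set q : ℂ × ℂ := (-(starRingEnd ℂ) p.2, (starRingEnd ℂ) p.1) with hqdef
  have hdq : dtm p q = Complex.normSq p.1 + Complex.normSq p.2 := by
    unfold dtm
    rw [show p.1 * q.2 - p.2 * q.1
        = p.1 * (starRingEnd ℂ) p.1 + p.2 * (starRingEnd ℂ) p.2 from by
          simp only [hqdef]; ring]
    rw [Complex.mul_conj, Complex.mul_conj, ← Complex.ofReal_add, Complex.abs_ofReal,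
      abs_of_nonneg (add_nonneg (Complex.normSq_nonneg _) (Complex.normSq_nonneg _))]
  have hdq0 : dtm p q ≠ 0 := by
    rw [hdq]
    have h1 : p.1 ≠ 0 ∨ p.2 ≠ 0 := by
      by_contra hc
      push_neg at hc
      exact hp (Prod.ext hc.1 hc.2)
    rcases h1 with h1 | h1
    · have := Complex.normSq_pos.2 h1
      nlinarith [Complex.normSq_nonneg p.2]
    · have := Complex.normSq_pos.2 h1
      nlinarith [Complex.normSq_nonneg p.1]
  have h0 : dtm (Tmap A B n p) (Tmap A B n q) = 0 := by
    rw [h]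
    unfold dtm
    show Complex.abs ((0 : ℂ × ℂ).1 * _ - (0 : ℂ × ℂ).2 * _) = 0
    simp
  rw [dtm_Tmap] at h0
  rcases mul_eq_zero.1 h0 with h0 | h0
  · exact hd (by simpa using h0)
  · exact hdq0 h0

lemma nrm_Tmap_le (n : ℕ) (p : ℂ × ℂ) :
    nrm (Tmap A B n p)
      ≤ Real.sqrt (nrm (colv A B n) ^ 2 + nrm (colv A B (n + 1)) ^ 2) * nrm p := by
  have hrow1 : Complex.abs (A n * p.1 + A (n + 1) * p.2)
      ≤ nrm (-(A (n + 1)), A n) * nrm p := by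
    have : Complex.abs (A n * p.1 + A (n + 1) * p.2) = dtm (-(A (n + 1)), A n) p := by
      unfold dtm
      rw [← AbsoluteValue.map_neg Complex.abs]
      congr 1
      ring
    rw [this]
    exact dtm_le _ _
  have hrow2 : Complex.abs (B n * p.1 + B (n + 1) * p.2)
      ≤ nrm (-(B (n + 1)), B n) * nrm p := by
    have : Complex.abs (B n * p.1 + B (n + 1) * p.2) = dtm (-(B (n + 1)), B n) p := by
      unfold dtm
      rw [← AbsoluteValue.map_neg Complex.abs]
      congr 1
      ring
    rw [this]
    exact dtm_le _ _
  have hsq : nrm (Tmap A B n p) ^ 2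
      ≤ (nrm (colv A B n) ^ 2 + nrm (colv A B (n + 1)) ^ 2) * nrm p ^ 2 := by
    have e1 : nrm (Tmap A B n p) ^ 2 = Complex.abs (A n * p.1 + A (n + 1) * p.2) ^ 2
        + Complex.abs (B n * p.1 + B (n + 1) * p.2) ^ 2 := nrm_sq _
    have e2 : nrm (-(A (n + 1)), A n) ^ 2 = Complex.abs (A (n + 1)) ^ 2 + Complex.abs (A n) ^ 2 := by
      rw [nrm_sq]
      simp
    have e3 : nrm (-(B (n + 1)), B n) ^ 2 = Complex.abs (B (n + 1)) ^ 2 + Complex.abs (B n) ^ 2 := by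
      rw [nrm_sq]
      simp
    have e4 : nrm (colv A B n) ^ 2 = Complex.abs (A n) ^ 2 + Complex.abs (B n) ^ 2 := nrm_sq _
    have e5 : nrm (colv A B (n + 1)) ^ 2
        = Complex.abs (A (n + 1)) ^ 2 + Complex.abs (B (n + 1)) ^ 2 := nrm_sq _
    have b1 : Complex.abs (A n * p.1 + A (n + 1) * p.2) ^ 2
        ≤ (Complex.abs (A (n + 1)) ^ 2 + Complex.abs (A n) ^ 2) * nrm p ^ 2 := by
      have := mul_self_le_mul_self (AbsoluteValue.nonneg _ _) hrow1
      calc Complex.abs (A n * p.1 + A (n + 1) * p.2) ^ 2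
          ≤ (nrm (-(A (n + 1)), A n) * nrm p) ^ 2 := by
            rw [sq, sq]; exact this
        _ = nrm (-(A (n + 1)), A n) ^ 2 * nrm p ^ 2 := by ring
        _ = _ := by rw [e2]
    have b2 : Complex.abs (B n * p.1 + B (n + 1) * p.2) ^ 2
        ≤ (Complex.abs (B (n + 1)) ^ 2 + Complex.abs (B n) ^ 2) * nrm p ^ 2 := by
      have := mul_self_le_mul_self (AbsoluteValue.nonneg _ _) hrow2
      calc Complex.abs (B n * p.1 + B (n + 1) * p.2) ^ 2
          ≤ (nrm (-(B (n + 1)), B n) * nrm p) ^ 2 := by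
            rw [sq, sq]; exact this
        _ = nrm (-(B (n + 1)), B n) ^ 2 * nrm p ^ 2 := by ring
        _ = _ := by rw [e3]
    rw [e1, e4, e5]
    nlinarith [b1, b2]
  have h1 := Real.sqrt_le_sqrt hsq
  rwa [Real.sqrt_sq (nrm_nonneg _),
    Real.sqrt_mul (by positivity), Real.sqrt_sq (nrm_nonneg p)] at h1

end CF

/-! ### Lower bounds along a parity class -/

lemma class_lower (A B : ℕ → ℂ) (f : Option ℂ) (g : ℂ) (idx : ℕ → ℕ)
    (ht : Tendsto (fun n => A (idx n) / B (idx n)) atTop (𝓝 g))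
    (hnone : f = none → ∀ᶠ n in atTop, B (idx n) ≠ 0)
    (hsome : ∀ c, f = some c → c ≠ g) :
    ∃ δ, 0 < δ ∧ ∀ᶠ n in atTop, δ ≤ chordal (modApprox A B (idx n) none) f := by
  cases f with
  | none =>
    have hB := hnone rfl
    have habs : Tendsto (fun n => Complex.abs (A (idx n) / B (idx n))) atTop
        (𝓝 (Complex.abs g)) := (Complex.continuous_abs.tendsto g).comp ht
    have hev : ∀ᶠ n in atTop, Complex.abs (A (idx n) / B (idx n)) < Complex.abs g + 1 :=
      habs.eventually_lt_const (by linarith)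
    refine ⟨1 / Real.sqrt (1 + (Complex.abs g + 1) ^ 2), by positivity, ?_⟩
    filter_upwards [hB, hev] with n hb hx
    rw [show modApprox A B (idx n) none = some (A (idx n) / B (idx n)) from by
      show (if B (idx n) = 0 then none else some (A (idx n) / B (idx n))) = _
      rw [if_neg hb]]
    show (1 : ℝ) / Real.sqrt (1 + (Complex.abs g + 1) ^ 2)
      ≤ 1 / Real.sqrt (1 + Complex.abs (A (idx n) / B (idx n)) ^ 2)
    have h1 : Real.sqrt (1 + Complex.abs (A (idx n) / B (idx n)) ^ 2)
        ≤ Real.sqrt (1 + (Complex.abs g + 1) ^ 2) := by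
      apply Real.sqrt_le_sqrt
      nlinarith [AbsoluteValue.nonneg Complex.abs (A (idx n) / B (idx n)),
        AbsoluteValue.nonneg Complex.abs g]
    apply one_div_le_one_div_of_le _ h1
    apply Real.sqrt_pos.2
    nlinarith [AbsoluteValue.nonneg Complex.abs (A (idx n) / B (idx n))]
  | some c =>
    have hcg : c ≠ g := hsome c rfl
    set d := Complex.abs (c - g) with hd_def
    have hd : 0 < d := AbsoluteValue.pos _ (sub_ne_zero.2 hcg)
    have hsub : Tendsto (fun n => Complex.abs (A (idx n) / B (idx n) - g)) atTop (𝓝 0) := by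
      have h1 : Tendsto (fun n => A (idx n) / B (idx n) - g) atTop (𝓝 (g - g)) :=
        ht.sub_const g
      rw [sub_self] at h1
      have h2 := (Complex.continuous_abs.tendsto 0).comp h1
      simpa [Function.comp_def] using h2
    have hev : ∀ᶠ n in atTop, Complex.abs (A (idx n) / B (idx n) - g) < d / 2 :=
      hsub.eventually_lt_const (by linarith)
    have hden1 : (0:ℝ) < Real.sqrt (1 + Complex.abs c ^ 2) := by
      apply Real.sqrt_pos.2
      nlinarith [AbsoluteValue.nonneg Complex.abs c]
    have hden2 : (0:ℝ) < Real.sqrt (1 + (Complex.abs g + d / 2) ^ 2) := by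
      apply Real.sqrt_pos.2
      nlinarith [AbsoluteValue.nonneg Complex.abs g]
    refine ⟨min (1 / Real.sqrt (1 + Complex.abs c ^ 2))
      ((d / 2) / (Real.sqrt (1 + (Complex.abs g + d / 2) ^ 2) * Real.sqrt (1 + Complex.abs c ^ 2))),
      lt_min (by positivity) (by positivity), ?_⟩
    filter_upwards [hev] with n hx
    by_cases hb : B (idx n) = 0
    · rw [show modApprox A B (idx n) none = none from by
        show (if B (idx n) = 0 then none else some (A (idx n) / B (idx n))) = _
        rw [if_pos hb]]
      exact le_trans (min_le_left _ _) (le_refl _)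
    · rw [show modApprox A B (idx n) none = some (A (idx n) / B (idx n)) from by
        show (if B (idx n) = 0 then none else some (A (idx n) / B (idx n))) = _
        rw [if_neg hb]]
      refine le_trans (min_le_right _ _) ?_
      set x := A (idx n) / B (idx n) with hx_def
      show (d / 2) / (Real.sqrt (1 + (Complex.abs g + d / 2) ^ 2) * Real.sqrt (1 + Complex.abs c ^ 2))
        ≤ Complex.abs (c - x) / (Real.sqrt (1 + Complex.abs x ^ 2) * Real.sqrt (1 + Complex.abs c ^ 2))
      have h1 : d / 2 ≤ Complex.abs (c - x) := by
        have h2 := Complex.abs.sub_le c x g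
        rw [← hd_def] at h2
        linarith
      have h2 : Complex.abs x ≤ Complex.abs g + d / 2 := by
        have h3 : Complex.abs x ≤ Complex.abs (x - g) + Complex.abs g := by
          calc Complex.abs x = Complex.abs (x - g + g) := by ring_nf
            _ ≤ Complex.abs (x - g) + Complex.abs g := AbsoluteValue.add_le _ _ _
        linarith
      have hden3 : Real.sqrt (1 + Complex.abs x ^ 2)
          ≤ Real.sqrt (1 + (Complex.abs g + d / 2) ^ 2) := by
        apply Real.sqrt_le_sqrt
        nlinarith [AbsoluteValue.nonneg Complex.abs x]
      have hden4 : (0:ℝ) < Real.sqrt (1 + Complex.abs x ^ 2) := by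
        apply Real.sqrt_pos.2
        nlinarith [AbsoluteValue.nonneg Complex.abs x]
      exact div_le_div₀ (AbsoluteValue.nonneg _ _) h1 (by positivity)
        (mul_le_mul_of_nonneg_right hden3 (le_of_lt hden1))

lemma freq_zero_limit (A B : ℕ → ℂ) (g : ℂ) (idx : ℕ → ℕ)
    (ht : Tendsto (fun n => A (idx n) / B (idx n)) atTop (𝓝 g))
    (h : ∃ᶠ n in atTop, B (idx n) = 0) : g = 0 := by
  obtain ⟨φ, hφ, hz⟩ := Filter.extraction_of_frequently_atTop h
  have h1 : Tendsto (fun k => A (idx (φ k)) / B (idx (φ k))) atTop (𝓝 g) :=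
    ht.comp hφ.tendsto_atTop
  have h2 : (fun k => A (idx (φ k)) / B (idx (φ k))) = fun _ => (0 : ℂ) :=
    funext fun k => by rw [hz k, div_zero]
  rw [h2] at h1
  exact (tendsto_nhds_unique h1 tendsto_const_nhds)

lemma buildP (A B : ℕ → ℂ) (f : Option ℂ) (g : ℂ) (e : ℕ)
    (ht : Tendsto (fun n => A (2 * n + e) / B (2 * n + e)) atTop (𝓝 g))
    (hnone : f = none → ∀ᶠ n in atTop, B (2 * n + e) ≠ 0)
    (hsome : ∀ c, f = some c → c ≠ g) :
    ∃ δ1, 0 < δ1 ∧ ∃ ii : ℕ → ℕ, Tendsto ii atTop atTop ∧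
      ∀ᶠ n in atTop, δ1 ≤ chordal (modApprox A B (ii n) none) f ∧
        δ1 ≤ chordal (modApprox A B (ii n + 2) none) f := by
  have heq : (fun n => A (2 * n + e + 2) / B (2 * n + e + 2))
      = (fun n => A (2 * n + e) / B (2 * n + e)) ∘ (fun n => n + 1) := by
    funext n
    simp only [Function.comp_apply]
    rw [show 2 * (n + 1) + e = 2 * n + e + 2 from by ring]
  have ht2 : Tendsto (fun n => A (2 * n + e + 2) / B (2 * n + e + 2)) atTop (𝓝 g) := by
    rw [heq]
    exact ht.comp (tendsto_add_atTop_nat 1)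
  have hnone2 : f = none → ∀ᶠ n in atTop, B (2 * n + e + 2) ≠ 0 := by
    intro hf
    obtain ⟨N, hN⟩ := eventually_atTop.1 (hnone hf)
    refine eventually_atTop.2 ⟨N, fun n hn => ?_⟩
    have h1 := hN (n + 1) (by omega)
    rwa [show 2 * (n + 1) + e = 2 * n + e + 2 from by ring] at h1
  obtain ⟨δa, hδa, hea⟩ := class_lower A B f g (fun n => 2 * n + e) ht hnone hsome
  obtain ⟨δb, hδb, heb⟩ := class_lower A B f g (fun n => 2 * n + e + 2) ht2 hnone2 hsome
  refine ⟨min δa δb, lt_min hδa hδb, fun n => 2 * n + e,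
    tendsto_atTop_mono (fun n => by simp only [id_eq]; omega) tendsto_id, ?_⟩
  filter_upwards [hea, heb] with n h1 h2
  exact ⟨le_trans (min_le_left _ _) h1, le_trans (min_le_right _ _) h2⟩

set_option maxHeartbeats 1000000 in
/-- **Theorem on divergence in the general sense.**  Let
`C = b₀ + K_{n=1}^∞ a n / b n` be a continued fraction whose odd part converges
to `f1` and whose even part converges to `f2`, with `f1 ≠ f2`.  If there are
positive constants `c1, c2, c3` with `c1 ≤ |b i| ≤ c2` and
`|a (2i+1) / a (2i)| ≤ c3` for `i ≥ 1`, then `C` does not converge generally: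
there are no `f` and sequences `v`, `w` on the Riemann sphere with
`liminf d(v n, w n) > 0` and `S_n(v n) → f`, `S_n(w n) → f` in the chordal
metric. -/
theorem general_divergence
    (a b A B : ℕ → ℂ) (f1 f2 : ℂ) (c1 c2 c3 : ℝ)
    (hc1 : 0 < c1) (hc2 : 0 < c2) (hc3 : 0 < c3)
    (hane : ∀ i, 1 ≤ i → a i ≠ 0)
    (hb : ∀ i, 1 ≤ i → c1 ≤ ‖b i‖ ∧ ‖b i‖ ≤ c2)
    (hratio : ∀ i, 1 ≤ i → ‖a (2 * i + 1) / a (2 * i)‖ ≤ c3)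
    (hA0 : A 0 = 1) (hA1 : A 1 = b 0) (hB0 : B 0 = 0) (hB1 : B 1 = 1)
    (hA : ∀ n, A (n + 2) = b (n + 1) * A (n + 1) + a (n + 1) * A n)
    (hB : ∀ n, B (n + 2) = b (n + 1) * B (n + 1) + a (n + 1) * B n)
    (hodd : Tendsto (fun n => A (2 * n + 2) / B (2 * n + 2)) atTop (𝓝 f1))
    (heven : Tendsto (fun n => A (2 * n + 1) / B (2 * n + 1)) atTop (𝓝 f2))
    (hf : f1 ≠ f2) :
    ¬ ∃ (f : Option ℂ) (v w : ℕ → Option ℂ),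
        0 < Filter.liminf (fun n => chordal (v n) (w n)) atTop ∧
        Tendsto (fun n => chordal (modApprox A B n (v n)) f) atTop (𝓝 0) ∧
        Tendsto (fun n => chordal (modApprox A B n (w n)) f) atTop (𝓝 0) := by
  rintro ⟨f, v, w, hm, hv, hw⟩
  have hdet : ∀ n, detc A B n ≠ 0 := detc_ne A B a b hane hA0 hA1 hB0 hB1 hA hB
  have hDpos : ∀ n, 0 < Complex.abs (detc A B n) := fun n => AbsoluteValue.pos _ (hdet n)
  have hRpos : ∀ k, 0 < nrm (colv A B k) := fun k => nrm_pos (colv_ne_zero A B (hdet k))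
  have hDle : ∀ t, Complex.abs (detc A B t) ≤ nrm (colv A B t) * nrm (colv A B (t + 1)) :=
    fun t => dtm_le (colv A B t) (colv A B (t + 1))
  have hs1 : ∀ t, nrm (colv A B t)
      ≤ Real.sqrt (nrm (colv A B t) ^ 2 + nrm (colv A B (t + 1)) ^ 2) := by
    intro t
    have h1 : nrm (colv A B t) ^ 2 ≤ nrm (colv A B t) ^ 2 + nrm (colv A B (t + 1)) ^ 2 := by
      nlinarith [sq_nonneg (nrm (colv A B (t + 1)))]
    have h2 := Real.sqrt_le_sqrt h1
    rwa [Real.sqrt_sq (nrm_nonneg _)] at h2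
  have hs2 : ∀ t, nrm (colv A B (t + 1))
      ≤ Real.sqrt (nrm (colv A B t) ^ 2 + nrm (colv A B (t + 1)) ^ 2) := by
    intro t
    have h1 : nrm (colv A B (t + 1)) ^ 2
        ≤ nrm (colv A B t) ^ 2 + nrm (colv A B (t + 1)) ^ 2 := by
      nlinarith [sq_nonneg (nrm (colv A B t))]
    have h2 := Real.sqrt_le_sqrt h1
    rwa [Real.sqrt_sq (nrm_nonneg _)] at h2
  set eps : ℕ → ℝ := fun n =>
    chordal (modApprox A B n (v n)) f + chordal (modApprox A B n (w n)) f with heps_def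
  have heps0 : Tendsto eps atTop (𝓝 0) := by
    have := hv.add hw
    simpa using this
  have hepsnn : ∀ n, 0 ≤ eps n :=
    fun n => add_nonneg (chordal_nonneg _ _) (chordal_nonneg _ _)
  set M : ℝ := Filter.liminf (fun n => chordal (v n) (w n)) atTop / 2 with hM_def
  have hMpos : 0 < M := half_pos hm
  have hvw_ev : ∀ᶠ n in atTop, M ≤ chordal (v n) (w n) := by
    have hbdd : IsBoundedUnder (· ≥ ·) atTop (fun n => chordal (v n) (w n)) :=
      ⟨0, eventually_map.2 (Eventually.of_forall fun n => chordal_nonneg _ _)⟩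
    have h1 : M < Filter.liminf (fun n => chordal (v n) (w n)) atTop := by
      rw [hM_def]
      linarith
    exact (eventually_lt_of_lt_liminf h1 hbdd).mono fun n h => le_of_lt h
  -- the key "determinant much smaller than Frobenius norm" inequality
  have hK : ∀ᶠ n in atTop, M * Complex.abs (detc A B n)
      ≤ eps n * (nrm (colv A B n) ^ 2 + nrm (colv A B (n + 1)) ^ 2) := by
    filter_upwards [hvw_ev] with n hvw
    have hlv := lft_ne_zero (v n)
    have hlw := lft_ne_zero (w n)
    have hTv0 := Tmap_ne_zero A B (hdet n) hlv
    have hTw0 := Tmap_ne_zero A B (hdet n) hlw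
    have hch : chordal (modApprox A B n (v n)) (modApprox A B n (w n)) ≤ eps n := by
      calc chordal (modApprox A B n (v n)) (modApprox A B n (w n))
          ≤ chordal (modApprox A B n (v n)) f + chordal f (modApprox A B n (w n)) :=
            chordal_triangle _ _ _
        _ = eps n := by rw [chordal_comm f]
    rw [modApprox_eq_pt A B n (v n), modApprox_eq_pt A B n (w n), chordal_pt hTv0 hTw0] at hch
    have h1 : dtm (Tmap A B n (lft (v n))) (Tmap A B n (lft (w n)))
        ≤ eps n * (nrm (Tmap A B n (lft (v n))) * nrm (Tmap A B n (lft (w n)))) := by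
      unfold dproj at hch
      exact (div_le_iff₀ (mul_pos (nrm_pos hTv0) (nrm_pos hTw0))).1 hch
    rw [dtm_Tmap] at h1
    have h2 : M * (nrm (lft (v n)) * nrm (lft (w n))) ≤ dtm (lft (v n)) (lft (w n)) := by
      have h := hvw
      rw [chordal_eq] at h
      unfold dproj at h
      exact (le_div_iff₀ (mul_pos (nrm_pos hlv) (nrm_pos hlw))).1 h
    have h3 := nrm_Tmap_le A B n (lft (v n))
    have h4 := nrm_Tmap_le A B n (lft (w n))
    have h5 : nrm (Tmap A B n (lft (v n))) * nrm (Tmap A B n (lft (w n)))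
        ≤ (Real.sqrt (nrm (colv A B n) ^ 2 + nrm (colv A B (n + 1)) ^ 2) * nrm (lft (v n)))
          * (Real.sqrt (nrm (colv A B n) ^ 2 + nrm (colv A B (n + 1)) ^ 2) * nrm (lft (w n))) :=
      mul_le_mul h3 h4 (nrm_nonneg _) (mul_nonneg (Real.sqrt_nonneg _) (nrm_nonneg _))
    have hsF : Real.sqrt (nrm (colv A B n) ^ 2 + nrm (colv A B (n + 1)) ^ 2) ^ 2
        = nrm (colv A B n) ^ 2 + nrm (colv A B (n + 1)) ^ 2 :=
      Real.sq_sqrt (add_nonneg (sq_nonneg _) (sq_nonneg _))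
    have hLv := nrm_pos hlv
    have hLw := nrm_pos hlw
    have hD := hDpos n
    have he := hepsnn n
    have hmain : (M * Complex.abs (detc A B n)) * (nrm (lft (v n)) * nrm (lft (w n)))
        ≤ (eps n * (nrm (colv A B n) ^ 2 + nrm (colv A B (n + 1)) ^ 2))
          * (nrm (lft (v n)) * nrm (lft (w n))) := by
      have h6 : Complex.abs (detc A B n) * (M * (nrm (lft (v n)) * nrm (lft (w n))))
          ≤ Complex.abs (detc A B n) * dtm (lft (v n)) (lft (w n)) :=
        mul_le_mul_of_nonneg_left h2 hD.le
      have h7 : eps n * (nrm (Tmap A B n (lft (v n))) * nrm (Tmap A B n (lft (w n))))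
          ≤ eps n * ((Real.sqrt (nrm (colv A B n) ^ 2 + nrm (colv A B (n + 1)) ^ 2) * nrm (lft (v n)))
            * (Real.sqrt (nrm (colv A B n) ^ 2 + nrm (colv A B (n + 1)) ^ 2) * nrm (lft (w n)))) :=
        mul_le_mul_of_nonneg_left h5 he
      have h8 : eps n * ((Real.sqrt (nrm (colv A B n) ^ 2 + nrm (colv A B (n + 1)) ^ 2) * nrm (lft (v n)))
            * (Real.sqrt (nrm (colv A B n) ^ 2 + nrm (colv A B (n + 1)) ^ 2) * nrm (lft (w n))))
          = eps n * ((nrm (colv A B n) ^ 2 + nrm (colv A B (n + 1)) ^ 2)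
            * (nrm (lft (v n)) * nrm (lft (w n)))) := by
        calc eps n * ((Real.sqrt (nrm (colv A B n) ^ 2 + nrm (colv A B (n + 1)) ^ 2) * nrm (lft (v n)))
              * (Real.sqrt (nrm (colv A B n) ^ 2 + nrm (colv A B (n + 1)) ^ 2) * nrm (lft (w n))))
            = eps n * (Real.sqrt (nrm (colv A B n) ^ 2 + nrm (colv A B (n + 1)) ^ 2) ^ 2
              * (nrm (lft (v n)) * nrm (lft (w n)))) := by ring
          _ = _ := by rw [hsF]
      linarith [h1, h6, h7, h8]
    exact le_of_mul_le_mul_right hmain (mul_pos hLv hLw)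
  -- parity class on which the approximants stay away from f
  obtain ⟨δ1, hδ1, ii, hii, hPev⟩ :
      ∃ δ1, 0 < δ1 ∧ ∃ ii : ℕ → ℕ, Tendsto ii atTop atTop ∧
        ∀ᶠ n in atTop, δ1 ≤ chordal (modApprox A B (ii n) none) f ∧
          δ1 ≤ chordal (modApprox A B (ii n + 2) none) f := by
    rcases f with _ | c
    · by_cases hE : ∀ᶠ n in atTop, B (2 * n + 2) ≠ 0
      · exact buildP A B none f1 2 hodd (fun _ => hE)
          (fun c hc => absurd hc (by simp))
      · by_cases hO : ∀ᶠ n in atTop, B (2 * n + 1) ≠ 0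
        · exact buildP A B none f2 1 heven (fun _ => hO)
            (fun c hc => absurd hc (by simp))
        · exfalso
          have h1 : f1 = 0 := freq_zero_limit A B f1 (fun n => 2 * n + 2) hodd
            ((Filter.not_eventually.1 hE).mono fun n h => not_not.1 h)
          have h2 : f2 = 0 := freq_zero_limit A B f2 (fun n => 2 * n + 1) heven
            ((Filter.not_eventually.1 hO).mono fun n h => not_not.1 h)
          exact hf (h1.trans h2.symm)
    · by_cases hcf1 : c = f1
      · refine buildP A B (some c) f2 1 heven (fun h => absurd h (by simp)) ?_
        intro c' hc'
        have : c = c' := by injection hc'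
        rw [← this, hcf1]
        exact hf
      · refine buildP A B (some c) f1 2 hodd (fun h => absurd h (by simp)) ?_
        intro c' hc'
        have : c = c' := by injection hc'
        rw [← this]
        exact hcf1
  -- the master inequality
  have hM1 : ∀ᶠ n in atTop, eps n ≤ δ1 / 2 :=
    (heps0.eventually_lt_const (by linarith : (0:ℝ) < δ1 / 2)).mono fun n h => le_of_lt h
  have hMkey : ∀ᶠ n in atTop, ∀ k, (k = n ∨ k = n + 1) →
      δ1 ≤ chordal (modApprox A B k none) f →
      M * δ1 * (nrm (colv A B k)
        * Real.sqrt (nrm (colv A B n) ^ 2 + nrm (colv A B (n + 1)) ^ 2))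
        ≤ 8 * Complex.abs (detc A B n) := by
    filter_upwards [hvw_ev, hM1] with n hvw hepsn
    intro k hk hXk
    have hdn := hdet n
    have hD := hDpos n
    have hFpos : 0 < nrm (colv A B n) ^ 2 + nrm (colv A B (n + 1)) ^ 2 :=
      add_pos (pow_pos (hRpos n) 2) (pow_pos (hRpos (n + 1)) 2)
    have hsFpos : 0 < Real.sqrt (nrm (colv A B n) ^ 2 + nrm (colv A B (n + 1)) ^ 2) :=
      Real.sqrt_pos.2 hFpos
    have hsF : Real.sqrt (nrm (colv A B n) ^ 2 + nrm (colv A B (n + 1)) ^ 2) ^ 2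
        = nrm (colv A B n) ^ 2 + nrm (colv A B (n + 1)) ^ 2 :=
      Real.sq_sqrt hFpos.le
    -- the nearly-singular direction
    set ebad : ℂ × ℂ := if nrm (colv A B n) ^ 2 + nrm (colv A B (n + 1)) ^ 2
        ≤ 2 * nrm (B (n + 1), -(B n)) ^ 2 then (B (n + 1), -(B n)) else (-(A (n + 1)), A n)
      with hebad_def
    have he2 : nrm (colv A B n) ^ 2 + nrm (colv A B (n + 1)) ^ 2 ≤ 2 * nrm ebad ^ 2 := by
      rw [hebad_def]
      split_ifs with h
      · exact h
      · push_neg at h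
        have s1 : nrm ((B (n + 1), -(B n)) : ℂ × ℂ) ^ 2
            = Complex.abs (B (n + 1)) ^ 2 + Complex.abs (B n) ^ 2 := by
          rw [nrm_sq]
          simp
        have s2 : nrm ((-(A (n + 1)), A n) : ℂ × ℂ) ^ 2
            = Complex.abs (A (n + 1)) ^ 2 + Complex.abs (A n) ^ 2 := by
          rw [nrm_sq]
          simp
        have s3 : nrm (colv A B n) ^ 2 = Complex.abs (A n) ^ 2 + Complex.abs (B n) ^ 2 :=
          nrm_sq _
        have s4 : nrm (colv A B (n + 1)) ^ 2
            = Complex.abs (A (n + 1)) ^ 2 + Complex.abs (B (n + 1)) ^ 2 := nrm_sq _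
        rw [s1] at h
        rw [s2, s3, s4]
        linarith
    have heT : nrm (Tmap A B n ebad) = Complex.abs (detc A B n) := by
      rw [hebad_def]
      split_ifs
      · have hT : Tmap A B n (B (n + 1), -(B n)) = (detc A B n, 0) := by
          apply Prod.ext
          · show A n * B (n + 1) + A (n + 1) * -(B n) = A n * B (n + 1) - B n * A (n + 1)
            ring
          · show B n * B (n + 1) + B (n + 1) * -(B n) = 0
            ring
        rw [hT]
        show Real.sqrt (Complex.abs (detc A B n) ^ 2 + Complex.abs 0 ^ 2) = _
        rw [map_zero, show ((0:ℝ) ^ 2 : ℝ) = 0 from by norm_num, add_zero]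
        exact Real.sqrt_sq (AbsoluteValue.nonneg _ _)
      · have hT : Tmap A B n (-(A (n + 1)), A n) = (0, detc A B n) := by
          apply Prod.ext
          · show A n * -(A (n + 1)) + A (n + 1) * A n = 0
            ring
          · show B n * -(A (n + 1)) + B (n + 1) * A n = A n * B (n + 1) - B n * A (n + 1)
            ring
        rw [hT]
        show Real.sqrt (Complex.abs 0 ^ 2 + Complex.abs (detc A B n) ^ 2) = _
        rw [map_zero, show ((0:ℝ) ^ 2 : ℝ) = 0 from by norm_num, zero_add]
        exact Real.sqrt_sq (AbsoluteValue.nonneg _ _)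
    have hebadn : 0 < nrm ebad := by nlinarith [nrm_nonneg ebad]
    have hebad0 : ebad ≠ 0 := by
      intro h0
      rw [h0] at hebadn
      simp [nrm] at hebadn
    have he3 : Real.sqrt (nrm (colv A B n) ^ 2 + nrm (colv A B (n + 1)) ^ 2) / 2 ≤ nrm ebad := by
      have he2' : nrm (colv A B n) ^ 2 + nrm (colv A B (n + 1)) ^ 2 ≤ (2 * nrm ebad) ^ 2 := by
        nlinarith [nrm_nonneg ebad]
      have := Real.sqrt_le_sqrt he2'
      rw [Real.sqrt_sq (by positivity)] at this
      linarith
    -- lower bound for images under Tmap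
    have hlow : ∀ x : ℂ × ℂ, dtm x ebad ≤ nrm (Tmap A B n x) := by
      intro x
      have h1 := dtm_le (Tmap A B n x) (Tmap A B n ebad)
      rw [dtm_Tmap, heT] at h1
      nlinarith [dtm_nonneg x ebad]
    -- choice of the good point p
    obtain ⟨p, hp1, hp2⟩ : ∃ p : Option ℂ, M / 2 ≤ dproj (lft p) ebad ∧
        chordal (modApprox A B n p) f ≤ eps n := by
      by_cases hsel : M / 2 ≤ dproj (lft (v n)) ebad
      · exact ⟨v n, hsel, le_add_of_nonneg_right (chordal_nonneg _ _)⟩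
      · refine ⟨w n, ?_, le_add_of_nonneg_left (chordal_nonneg _ _)⟩
        push_neg at hsel
        have htr := dproj_triangle (lft_ne_zero (v n)) hebad0 (lft_ne_zero (w n))
        have hvwd : M ≤ dproj (lft (v n)) (lft (w n)) := by
          rw [← chordal_eq]
          exact hvw
        rw [dproj_comm ebad (lft (w n))] at htr
        linarith
    have hlp0 : lft p ≠ 0 := lft_ne_zero p
    have hnlp : 0 < nrm (lft p) := nrm_pos hlp0
    have hTlp0 : Tmap A B n (lft p) ≠ 0 := Tmap_ne_zero A B hdn hlp0
    have hTlp : 0 < nrm (Tmap A B n (lft p)) := nrm_pos hTlp0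
    -- lower bound for the image of p
    have hlb : M / 2 * (Real.sqrt (nrm (colv A B n) ^ 2 + nrm (colv A B (n + 1)) ^ 2) / 2)
        * nrm (lft p) ≤ nrm (Tmap A B n (lft p)) := by
      have h1 : dtm (lft p) ebad = dproj (lft p) ebad * (nrm (lft p) * nrm ebad) := by
        unfold dproj
        field_simp
      have h2 := hlow (lft p)
      have h3 : M / 2 * (nrm (lft p) * nrm ebad) ≤ dproj (lft p) ebad * (nrm (lft p) * nrm ebad) :=
        mul_le_mul_of_nonneg_right hp1 (mul_nonneg (nrm_nonneg _) (nrm_nonneg _))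
      nlinarith [mul_le_mul_of_nonneg_left he3 (mul_nonneg (by linarith : (0:ℝ) ≤ M / 2) hnlp.le)]
    -- the test point z with S_n(z) = X_k
    obtain ⟨z, hSz, hTz, hnz⟩ : ∃ z : Option ℂ, modApprox A B n z = modApprox A B k none ∧
        Tmap A B n (lft z) = colv A B k ∧ nrm (lft z) = 1 := by
      rcases hk with rfl | rfl
      · refine ⟨none, rfl, ?_, ?_⟩
        · apply Prod.ext
          · show A k * 1 + A (k + 1) * 0 = A k
            ring
          · show B k * 1 + B (k + 1) * 0 = B k
            ring
        · show Real.sqrt (Complex.abs 1 ^ 2 + Complex.abs 0 ^ 2) = 1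
          simp
      · refine ⟨some 0, modApprox_some_zero A B n, ?_, ?_⟩
        · apply Prod.ext
          · show A n * 0 + A (n + 1) * 1 = A (n + 1)
            ring
          · show B n * 0 + B (n + 1) * 1 = B (n + 1)
            ring
        · show Real.sqrt (Complex.abs 0 ^ 2 + Complex.abs 1 ^ 2) = 1
          simp
    -- main chain
    rw [modApprox_eq_pt A B n p] at hp2
    have hch : δ1 ≤ dproj (Tmap A B n (lft z)) (Tmap A B n (lft p)) + eps n := by
      calc δ1 ≤ chordal (modApprox A B k none) f := hXk
        _ ≤ chordal (modApprox A B k none) (modApprox A B n p)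
            + chordal (modApprox A B n p) f := chordal_triangle _ _ _
        _ ≤ dproj (Tmap A B n (lft z)) (Tmap A B n (lft p)) + eps n := by
            rw [← hSz, modApprox_eq_pt A B n z, modApprox_eq_pt A B n p,
              chordal_pt (Tmap_ne_zero A B hdn (lft_ne_zero z)) hTlp0]
            exact add_le_add_right hp2 _
    rw [hTz] at hch
    have hd2a : δ1 - eps n ≤ dproj (colv A B k) (Tmap A B n (lft p)) := by linarith [hch]
    have hd2b : δ1 / 2 ≤ δ1 - eps n := by linarith [hepsn]
    have hd2 : δ1 / 2 ≤ dproj (colv A B k) (Tmap A B n (lft p)) := le_trans hd2b hd2a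
    have hq1 : δ1 / 2 * (nrm (colv A B k) * nrm (Tmap A B n (lft p)))
        ≤ dtm (colv A B k) (Tmap A B n (lft p)) := by
      unfold dproj at hd2
      exact (le_div_iff₀ (mul_pos (hRpos k) hTlp)).1 hd2
    have hq2 : dtm (colv A B k) (Tmap A B n (lft p)) ≤ Complex.abs (detc A B n) * nrm (lft p) := by
      rw [← hTz, dtm_Tmap]
      have h1 := dtm_le (lft z) (lft p)
      rw [hnz, one_mul] at h1
      exact mul_le_mul_of_nonneg_left h1 hD.le
    -- put everything together
    have hfin : (M * δ1 * (nrm (colv A B k)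
        * Real.sqrt (nrm (colv A B n) ^ 2 + nrm (colv A B (n + 1)) ^ 2))) * nrm (lft p)
        ≤ (8 * Complex.abs (detc A B n)) * nrm (lft p) := by
      have h5 : δ1 / 2 * (nrm (colv A B k)
          * (M / 2 * (Real.sqrt (nrm (colv A B n) ^ 2 + nrm (colv A B (n + 1)) ^ 2) / 2)
            * nrm (lft p)))
          ≤ δ1 / 2 * (nrm (colv A B k) * nrm (Tmap A B n (lft p))) := by
        apply mul_le_mul_of_nonneg_left _ (by linarith : (0:ℝ) ≤ δ1 / 2)
        exact mul_le_mul_of_nonneg_left hlb (hRpos k).le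
      linarith [hq1, hq2, h5]
    exact le_of_mul_le_mul_right hfin hnlp
  -- final assembly
  set K := M * δ1 with hK_def
  have hKpos : 0 < K := mul_pos hMpos hδ1
  have hden : (0:ℝ) < 8 * (K + 8 + K * c1) := by nlinarith [hKpos, hc1]
  set EPS : ℝ := M * K ^ 2 * c1 / (8 * (K + 8 + K * c1)) with hEPS_def
  have hEPSpos : 0 < EPS := by
    apply div_pos _ hden
    have := pow_pos hKpos 2
    exact mul_pos (mul_pos hMpos this) hc1
  obtain ⟨NM, hNM⟩ := eventually_atTop.1 hMkey
  obtain ⟨NK, hNK⟩ := eventually_atTop.1 hK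
  obtain ⟨NE, hNE⟩ := eventually_atTop.1 (heps0.eventually_lt_const hEPSpos)
  obtain ⟨n, hn1, hn3a, hn3b⟩ :
      ∃ n, (max (max NM NK) NE ≤ ii n) ∧ δ1 ≤ chordal (modApprox A B (ii n) none) f ∧
        δ1 ≤ chordal (modApprox A B (ii n + 2) none) f := by
    obtain ⟨n, h1, h2⟩ := ((hii.eventually_ge_atTop (max (max NM NK) NE)).and hPev).exists
    exact ⟨n, h1, h2.1, h2.2⟩
  set i0 := ii n with hi0_def
  have hNMi : NM ≤ i0 := le_trans (le_trans (le_max_left _ _) (le_max_left _ _)) hn1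
  have hNMi1 : NM ≤ i0 + 1 := by omega
  have hNKi : NK ≤ i0 + 1 := by
    have := le_trans (le_trans (le_max_right _ _) (le_max_left _ _)) hn1
    omega
  have hNEi : NE ≤ i0 + 1 := by
    have := le_trans (le_max_right _ _) hn1
    omega
  -- instantiate the master inequality twice, hK once
  have g1 : K * (nrm (colv A B i0)
      * Real.sqrt (nrm (colv A B i0) ^ 2 + nrm (colv A B (i0 + 1)) ^ 2))
      ≤ 8 * Complex.abs (detc A B i0) :=
    hNM i0 hNMi i0 (Or.inl rfl) hn3a
  have g2 : K * (nrm (colv A B (i0 + 2))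
      * Real.sqrt (nrm (colv A B (i0 + 1)) ^ 2 + nrm (colv A B (i0 + 2)) ^ 2))
      ≤ 8 * Complex.abs (detc A B (i0 + 1)) :=
    hNM (i0 + 1) hNMi1 (i0 + 2) (Or.inr rfl) hn3b
  have g6 : M * Complex.abs (detc A B (i0 + 1))
      ≤ eps (i0 + 1) * (nrm (colv A B (i0 + 1)) ^ 2 + nrm (colv A B (i0 + 2)) ^ 2) :=
    hNK (i0 + 1) hNKi
  have ge1 : eps (i0 + 1) < EPS := hNE (i0 + 1) hNEi
  -- the three-term recurrence for the columns
  have hcol : b (i0 + 1) • colv A B (i0 + 1) = colv A B (i0 + 2) - a (i0 + 1) • colv A B i0 := by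
    apply Prod.ext
    · show b (i0 + 1) * A (i0 + 1) = A (i0 + 2) - a (i0 + 1) * A i0
      rw [hA i0]
      ring
    · show b (i0 + 1) * B (i0 + 1) = B (i0 + 2) - a (i0 + 1) * B i0
      rw [hB i0]
      ring
  have g3 : c1 * nrm (colv A B (i0 + 1))
      ≤ nrm (colv A B (i0 + 2)) + Complex.abs (a (i0 + 1)) * nrm (colv A B i0) := by
    have h1 : Complex.abs (b (i0 + 1)) * nrm (colv A B (i0 + 1))
        = nrm (colv A B (i0 + 2) - a (i0 + 1) • colv A B i0) := by
      rw [← nrm_smul, hcol]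
    have h2 : nrm (colv A B (i0 + 2) - a (i0 + 1) • colv A B i0)
        ≤ nrm (colv A B (i0 + 2)) + Complex.abs (a (i0 + 1)) * nrm (colv A B i0) := by
      rw [sub_eq_add_neg]
      refine le_trans (nrm_add_le _ _) ?_
      rw [nrm_neg, nrm_smul]
    have h3 : c1 ≤ Complex.abs (b (i0 + 1)) := (hb (i0 + 1) (by omega)).1
    have h4 : c1 * nrm (colv A B (i0 + 1)) ≤ Complex.abs (b (i0 + 1)) * nrm (colv A B (i0 + 1)) :=
      mul_le_mul_of_nonneg_right h3 (nrm_nonneg _)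
    rw [h1] at h4
    linarith only [h2, h4]
  have g4 : Complex.abs (a (i0 + 1)) * Complex.abs (detc A B i0)
      = Complex.abs (detc A B (i0 + 1)) := (detc_succ_abs A B a b hA hB i0).symm
  -- instances of the global facts
  have hs2a := hs2 i0
  have hs1b := hs1 (i0 + 1)
  have hs2b := hs2 (i0 + 1)
  have hDle1 := hDle (i0 + 1)
  have hR0 := hRpos i0
  have hR1 := hRpos (i0 + 1)
  have hR2 := hRpos (i0 + 2)
  have hD1p := hDpos (i0 + 1)
  have he1nn := hepsnn (i0 + 1)
  have haann : 0 ≤ Complex.abs (a (i0 + 1)) := AbsoluteValue.nonneg _ _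
  -- abbreviations
  set R0 := nrm (colv A B i0) with hR0_def
  set R1 := nrm (colv A B (i0 + 1)) with hR1_def
  set R2 := nrm (colv A B (i0 + 2)) with hR2_def
  set D0 := Complex.abs (detc A B i0) with hD0_def
  set D1 := Complex.abs (detc A B (i0 + 1)) with hD1_def
  set aa := Complex.abs (a (i0 + 1)) with haa_def
  set e1 := eps (i0 + 1) with he1_def
  -- pure arithmetic from here on
  have A1 : K * (R0 * R1) ≤ 8 * D0 := by
    refine le_trans ?_ g1
    have : R0 * R1 ≤ R0 * Real.sqrt (R0 ^ 2 + R1 ^ 2) :=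
      mul_le_mul_of_nonneg_left hs2a hR0.le
    exact mul_le_mul_of_nonneg_left this hKpos.le
  have A2 : K * (R2 * R1) ≤ 8 * D1 := by
    refine le_trans ?_ g2
    have : R2 * R1 ≤ R2 * Real.sqrt (R1 ^ 2 + R2 ^ 2) :=
      mul_le_mul_of_nonneg_left hs1b hR2.le
    exact mul_le_mul_of_nonneg_left this hKpos.le
  have A3 : K * (R2 * R2) ≤ 8 * D1 := by
    refine le_trans ?_ g2
    have : R2 * R2 ≤ R2 * Real.sqrt (R1 ^ 2 + R2 ^ 2) :=
      mul_le_mul_of_nonneg_left hs2b hR2.le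
    exact mul_le_mul_of_nonneg_left this hKpos.le
  have A6 : K * (aa * R0) ≤ 8 * R2 := by
    have u1 : aa * (K * (R0 * R1)) ≤ aa * (8 * D0) := mul_le_mul_of_nonneg_left A1 haann
    have u2 : aa * (8 * D0) = 8 * D1 := by
      rw [← g4]
      ring
    have u3 : 8 * D1 ≤ 8 * (R1 * R2) := by linarith [hDle1]
    have u4 : (K * (aa * R0)) * R1 ≤ (8 * R2) * R1 := by linarith only [u1, u2, u3]
    exact le_of_mul_le_mul_right u4 hR1
  have A8 : K * (c1 * R1) ≤ (K + 8) * R2 := by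
    have v1 : K * (c1 * R1) ≤ K * (R2 + aa * R0) := mul_le_mul_of_nonneg_left g3 hKpos.le
    linarith only [v1, A6]
  have B1 : K * (c1 * (R1 * R1)) ≤ (K + 8) * (R2 * R1) := by
    have := mul_le_mul_of_nonneg_right A8 hR1.le
    linarith only [this]
  have B2 : K * (K * (c1 * (R1 * R1))) ≤ (K + 8) * (8 * D1) := by
    have w1 : K * (K * (c1 * (R1 * R1))) ≤ K * ((K + 8) * (R2 * R1)) :=
      mul_le_mul_of_nonneg_left B1 hKpos.le
    have w2 : (K + 8) * (K * (R2 * R1)) ≤ (K + 8) * (8 * D1) :=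
      mul_le_mul_of_nonneg_left A2 (by linarith only [hKpos] : (0:ℝ) ≤ K + 8)
    linarith only [w1, w2]
  have B3 : K * (K * (c1 * (R2 * R2))) ≤ K * (c1 * (8 * D1)) := by
    have x1 : (K * c1) * (K * (R2 * R2)) ≤ (K * c1) * (8 * D1) :=
      mul_le_mul_of_nonneg_left A3 (mul_nonneg hKpos.le hc1.le)
    linarith only [x1]
  have C0 : K * (K * (c1 * (R1 ^ 2 + R2 ^ 2))) ≤ (K + 8) * (8 * D1) + K * (c1 * (8 * D1)) := by
    linarith only [B2, B3]
  have C1 : (K * (K * c1)) * (M * D1) ≤ (K * (K * c1)) * (e1 * (R1 ^ 2 + R2 ^ 2)) :=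
    mul_le_mul_of_nonneg_left g6 (mul_nonneg hKpos.le (mul_nonneg hKpos.le hc1.le))
  have C2 : e1 * (K * (K * (c1 * (R1 ^ 2 + R2 ^ 2))))
      ≤ e1 * ((K + 8) * (8 * D1) + K * (c1 * (8 * D1))) :=
    mul_le_mul_of_nonneg_left C0 he1nn
  have Cfin : (M * (K * (K * c1))) * D1 ≤ (e1 * (8 * (K + 8 + K * c1))) * D1 := by
    linarith only [C1, C2]
  have Z1 : M * (K * (K * c1)) ≤ e1 * (8 * (K + 8 + K * c1)) :=
    le_of_mul_le_mul_right Cfin hD1p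
  have Z2 : e1 * (8 * (K + 8 + K * c1)) < EPS * (8 * (K + 8 + K * c1)) :=
    mul_lt_mul_of_pos_right ge1 hden
  have Z3 : EPS * (8 * (K + 8 + K * c1)) = M * K ^ 2 * c1 := by
    rw [hEPS_def]
    exact div_mul_cancel₀ _ (ne_of_gt hden)
  linarith only [Z1, Z2, Z3]
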